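/- Let a(η) = e^{-iη}/(2cos η) and Φ₄(η) = (1-|a|⁴)sin 3η - |a|³ sin 2η + |a|⁴ sin η for η ∈ (0,π/3). Then Φ₄(η) has the same sign as 1 - 2|a(η)|⁴, and Φ₄ has a unique zero in the interval (π/4, π/3). -/

import Mathlib

open Real Set

theorem stmt10 (A Φ : ℝ → ℝ)
    (hA : ∀ η, A η = 1 / (2 * Real.cos η))
    (hΦ : ∀ η, Φ η = (1 - A η ^ 4) * Real.sin (3 * η)
      - A η ^ 3 * Real.sin (2 * η) + A η ^ 4 * Real.sin η) :
    (∀ η, 0 < η → η < π / 3 →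
      ((0 < Φ η ↔ 0 < 1 - 2 * A η ^ 4) ∧ (Φ η = 0 ↔ 1 - 2 * A η ^ 4 = 0))) ∧
    (∃! η : ℝ, η ∈ Set.Ioo (π / 4) (π / 3) ∧ Φ η = 0) := by
  have hpi := Real.pi_pos
  -- cos η > 1/2 on (0, π/3)
  have hcos : ∀ η : ℝ, 0 < η → η < π / 3 → 1/2 < Real.cos η := by
    intro η h0 h1
    have : Real.cos (π/3) < Real.cos η :=
      Real.cos_lt_cos_of_nonneg_of_le_pi h0.le (by linarith) h1
    rwa [Real.cos_pi_div_three] at this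
  -- key factorization
  have key : ∀ η : ℝ, 0 < η → η < π / 3 →
      Φ η = Real.sin η * (4 * Real.cos η ^ 2 - 1) * (1 - 2 * A η ^ 4) := by
    intro η h0 h1
    have hc : Real.cos η ≠ 0 := by have := hcos η h0 h1; linarith
    have h3 : Real.sin (3 * η) = 3 * Real.sin η - 4 * Real.sin η ^ 3 := Real.sin_three_mul η
    have h2 : Real.sin (2 * η) = 2 * Real.sin η * Real.cos η := Real.sin_two_mul η
    have hs : Real.sin η ^ 3 = Real.sin η * (1 - Real.cos η ^ 2) := by
      have := Real.sin_sq η; linear_combination Real.sin η * this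
    rw [hΦ, hA, h3, h2, hs]
    field_simp
    ring
  -- positivity of the prefactor
  have hK : ∀ η : ℝ, 0 < η → η < π / 3 →
      0 < Real.sin η * (4 * Real.cos η ^ 2 - 1) := by
    intro η h0 h1
    have hs : 0 < Real.sin η := Real.sin_pos_of_pos_of_lt_pi h0 (by linarith)
    have hc := hcos η h0 h1
    have h4 : 0 < 4 * Real.cos η ^ 2 - 1 := by nlinarith
    exact mul_pos hs h4
  have part1 : ∀ η, 0 < η → η < π / 3 →
      ((0 < Φ η ↔ 0 < 1 - 2 * A η ^ 4) ∧ (Φ η = 0 ↔ 1 - 2 * A η ^ 4 = 0)) := by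
    intro η h0 h1
    have hk := hK η h0 h1
    rw [key η h0 h1]
    refine ⟨⟨fun h => by nlinarith, fun h => by nlinarith⟩, ?_, fun h => by rw [h, mul_zero]⟩
    intro h
    rcases mul_eq_zero.mp h with h' | h'
    · exact absurd h' hk.ne'
    · exact h'
  refine ⟨part1, ?_⟩
  -- the root: η₀ = arccos x,  x = (1/8)^(1/4)
  set x : ℝ := ((1:ℝ)/8) ^ ((1:ℝ)/4) with hxdef
  have hx4 : x ^ (4:ℕ) = 1/8 := by
    rw [hxdef, ← Real.rpow_natCast (((1:ℝ)/8) ^ ((1:ℝ)/4)) 4, ← Real.rpow_mul (by norm_num)]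
    norm_num
  have hxpos : 0 < x := Real.rpow_pos_of_pos (by norm_num) _
  have hsq2 : (Real.sqrt 2) ^ 2 = 2 := Real.sq_sqrt (by norm_num)
  have hxlt : x < Real.sqrt 2 / 2 := by
    by_contra h
    push_neg at h
    have h2 : (Real.sqrt 2 / 2) ^ (4:ℕ) ≤ x ^ (4:ℕ) :=
      pow_le_pow_left₀ (by positivity) h 4
    rw [hx4] at h2
    nlinarith
  have hxgt : 1/2 < x := by
    by_contra h
    push_neg at h
    have h2 : x ^ (4:ℕ) ≤ (1/2 : ℝ) ^ (4:ℕ) := pow_le_pow_left₀ hxpos.le h 4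
    rw [hx4] at h2
    norm_num at h2
  have hxle1 : x ≤ 1 := by
    have : Real.sqrt 2 < 2 := by nlinarith [Real.sqrt_nonneg 2]
    linarith
  set η₀ : ℝ := Real.arccos x with hη₀
  have hcη₀ : Real.cos η₀ = x := Real.cos_arccos (by linarith) hxle1
  have hη₀mem : η₀ ∈ Set.Ioo (π/4) (π/3) := by
    constructor
    · by_contra h
      push_neg at h
      have : Real.cos (π/4) ≤ Real.cos η₀ :=
        Real.cos_le_cos_of_nonneg_of_le_pi (Real.arccos_nonneg x) (by linarith) h
      rw [Real.cos_pi_div_four, hcη₀] at this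
      linarith
    · by_contra h
      push_neg at h
      have : Real.cos η₀ ≤ Real.cos (π/3) :=
        Real.cos_le_cos_of_nonneg_of_le_pi (by linarith) (Real.arccos_le_pi x) h
      rw [Real.cos_pi_div_three, hcη₀] at this
      linarith
  have h0η₀ : 0 < η₀ := lt_trans (by linarith) hη₀mem.1
  have hAη₀ : 1 - 2 * A η₀ ^ 4 = 0 := by
    rw [hA, hcη₀]
    have hxne : x ≠ 0 := hxpos.ne'
    field_simp
    linear_combination (8:ℝ) * hx4
  refine ⟨η₀, ⟨hη₀mem, ?_⟩, ?_⟩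
  · exact ((part1 η₀ h0η₀ hη₀mem.2).2).mpr hAη₀
  · rintro η ⟨hmem, hΦη⟩
    have h0 : 0 < η := lt_trans (by linarith) hmem.1
    have h1 : η < π/3 := hmem.2
    have hz : 1 - 2 * A η ^ 4 = 0 := ((part1 η h0 h1).2).mp hΦη
    have hc := hcos η h0 h1
    have hcne : Real.cos η ≠ 0 := by linarith
    rw [hA] at hz
    have hc4 : Real.cos η ^ 4 = 1/8 := by
      field_simp at hz
      linarith
    have hcx : Real.cos η = x := by
      rcases lt_trichotomy (Real.cos η) x with h | h | h
      · have := pow_lt_pow_left₀ h (by linarith) (show 4 ≠ 0 by norm_num)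
        rw [hc4, hx4] at this; norm_num at this
      · exact h
      · have := pow_lt_pow_left₀ h hxpos.le (show 4 ≠ 0 by norm_num)
        rw [hc4, hx4] at this; norm_num at this
    have : Real.arccos (Real.cos η) = η :=
      Real.arccos_cos h0.le (by linarith)
    rw [← this, hcx]
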